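/- A hyperplane Y = ker(f) in c₀, where f = (aₙ) ∈ ℓ¹ with ‖f‖ = 1, has property-(HB) in c₀ if and only if f = ±e_m for some m (i.e., Y is an M-summand in c₀). -/

import Mathlib

open NormedSpace Metric Set

namespace Paper

variable {X : Type*} [NormedAddCommGroup X] [NormedSpace ℝ X]

/-- The restriction of a continuous linear functional to a subspace. -/
noncomputable def restr (Y : Submodule ℝ X) (f : StrongDual ℝ X) : StrongDual ℝ ↥Y :=
  f.comp Y.subtypeL

/-- The annihilator `Y⊥` of a subspace `Y` in the dual. -/
def ann (Y : Submodule ℝ X) : Set (StrongDual ℝ X) := {f | ∀ y ∈ Y, f y = 0}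

/-- The set of norm-preserving (Hahn–Banach) extensions of `g : Y* ` to `X`. -/
def HB (Y : Submodule ℝ X) (g : StrongDual ℝ ↥Y) : Set (StrongDual ℝ X) :=
  {f | (∀ y : Y, f (y : X) = g y) ∧ ‖f‖ = ‖g‖}

/-- Best approximations to `x` from a set `A`. -/
def bestApprox {E : Type*} [NormedAddCommGroup E] (A : Set E) (x : E) : Set E :=
  {z ∈ A | ‖x - z‖ = infDist x A}

/-- Property-(U): every functional on `Y` has a unique norm-preserving extension to `X`. -/
def propU (Y : Submodule ℝ X) : Prop :=
  ∀ g : StrongDual ℝ ↥Y, ∃! f : StrongDual ℝ X, f ∈ HB Y g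

/-- `Y# `: the set of functionals whose norm equals the norm of their restriction to `Y`. -/
def sharp (Y : Submodule ℝ X) : Set (StrongDual ℝ X) := {f | ‖f‖ = ‖restr Y f‖}

/-- Property-(HB), stated via the decomposition `X* = Y# ⊕ Y⊥`. -/
def propHB (Y : Submodule ℝ X) : Prop :=
  (∀ f ∈ sharp Y, ∀ g ∈ sharp Y, f + g ∈ sharp Y) ∧
  (∀ (c : ℝ), ∀ f ∈ sharp Y, c • f ∈ sharp Y) ∧
  (∀ f : StrongDual ℝ X, ∃ g ∈ sharp Y, ∃ h ∈ ann Y, f = g + h) ∧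
  (∀ g ∈ sharp Y, ∀ h ∈ ann Y, h ≠ 0 → ‖g‖ < ‖g + h‖ ∧ ‖h‖ ≤ ‖g + h‖)

end Paper

open Paper

open ZeroAtInfty BoundedContinuousFunction

namespace Stmt13Aux

noncomputable def finC0 (v : ℕ → ℝ) (N : ℕ) (hv : ∀ n, N ≤ n → v n = 0) : C₀(ℕ, ℝ) where
  toFun := v
  continuous_toFun := continuous_of_discreteTopology
  zero_at_infty' := by
    rw [Filter.cocompact_eq_cofinite, Nat.cofinite_eq_atTop]
    refine Filter.Tendsto.congr' ?_ tendsto_const_nhds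
    filter_upwards [Filter.eventually_ge_atTop N] with n hn
    exact (hv n hn).symm

@[simp] lemma finC0_apply (v : ℕ → ℝ) (N : ℕ) (hv : ∀ n, N ≤ n → v n = 0) (n : ℕ) :
    finC0 v N hv n = v n := rfl

lemma apply_le_norm (x : C₀(ℕ, ℝ)) (n : ℕ) : |x n| ≤ ‖x‖ := by
  simpa using BoundedContinuousFunction.norm_coe_le_norm x.toBCF n

lemma norm_le_of (x : C₀(ℕ, ℝ)) {C : ℝ} (hC : 0 ≤ C) (h : ∀ n, |x n| ≤ C) : ‖x‖ ≤ C := by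
  rw [← ZeroAtInftyContinuousMap.norm_toBCF_eq_norm]
  exact (BoundedContinuousFunction.norm_le hC).mpr (by simpa using h)

noncomputable def delta (m : ℕ) : C₀(ℕ, ℝ) :=
  finC0 (fun n => if n = m then 1 else 0) (m + 1)
    (fun n hn => by simp [Nat.ne_of_gt hn])

@[simp] lemma delta_apply_self (m : ℕ) : delta m m = 1 := by simp [delta]

lemma delta_apply_ne {n m : ℕ} (h : n ≠ m) : delta m n = 0 := by simp [delta, h]

lemma norm_delta_le (m : ℕ) : ‖delta m‖ ≤ 1 := by
  refine norm_le_of _ zero_le_one fun n => ?_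
  by_cases h : n = m <;> simp [delta, h]

lemma abs_add_abs_le_max (A B : ℝ) : |A| + |B| ≤ max (|A + B|) (|A - B|) := by
  rcases abs_cases A with ⟨hA, _⟩ | ⟨hA, _⟩ <;> rcases abs_cases B with ⟨hB, _⟩ | ⟨hB, _⟩ <;>
    rcases abs_cases (A + B) with ⟨h1, _⟩ | ⟨h1, _⟩ <;>
    rcases abs_cases (A - B) with ⟨h2, _⟩ | ⟨h2, _⟩ <;>
    simp only [le_max_iff] <;> first | (left; linarith) | (right; linarith)

noncomputable def evalC0 (m : ℕ) : StrongDual ℝ C₀(ℕ, ℝ) :=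
  LinearMap.mkContinuous
    { toFun := fun x => x m
      map_add' := fun x y => rfl
      map_smul' := fun c x => rfl }
    1 (fun x => by simpa using apply_le_norm x m)

@[simp] lemma evalC0_apply (m : ℕ) (x : C₀(ℕ, ℝ)) : evalC0 m x = x m := rfl


set_option maxHeartbeats 1000000 in
lemma f_norm_ge (a : lp (fun _ : ℕ => ℝ) 1) (f : StrongDual ℝ C₀(ℕ, ℝ))
    (hf : ∀ x : C₀(ℕ, ℝ), f x = ∑' n, a n * x n)
    (hsumx : ∀ x : C₀(ℕ, ℝ), Summable fun n => a n * x n) (N : ℕ) :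
    ∑ n ∈ Finset.range N, |a n| ≤ ‖f‖ := by
  set u : ℕ → ℝ := fun n => if n < N then (if a n = 0 then 0 else |a n| / a n) else 0
    with hu_def
  have huN : ∀ n, N ≤ n → u n = 0 := fun n hn => by simp [hu_def, not_lt.mpr hn]
  set xN : C₀(ℕ, ℝ) := finC0 u N huN with hxN_def
  have hxN_apply : ∀ n, xN n = u n := fun n => rfl
  have hxN_norm : ‖xN‖ ≤ 1 := by
    refine norm_le_of _ zero_le_one fun n => ?_
    rw [hxN_apply, hu_def]
    rcases lt_or_ge n N with h1 | h1
    · simp only [if_pos h1]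
      rcases eq_or_ne (a n) 0 with h2 | h2
      · simp [h2]
      · rw [if_neg h2, abs_div, abs_abs, div_self (abs_ne_zero.mpr h2)]
    · simp [not_lt.mpr h1]
  have hfxN : f xN = ∑ n ∈ Finset.range N, |a n| := by
    rw [hf]
    have heq : ∑' n, a n * xN n = ∑ n ∈ Finset.range N, a n * xN n := by
      refine tsum_eq_sum fun b hb => ?_
      rw [hxN_apply, huN b (by simpa using hb), mul_zero]
    rw [heq]
    refine Finset.sum_congr rfl fun n hn => ?_
    rw [hxN_apply, hu_def]
    simp only [if_pos (Finset.mem_range.mp hn)]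
    rcases eq_or_ne (a n) 0 with h2 | h2
    · simp [h2]
    · rw [if_neg h2]; field_simp
  have h1 := f.unit_le_opNorm xN hxN_norm
  rw [hfxN] at h1
  exact (le_abs_self _).trans h1

set_option maxHeartbeats 2000000 in
lemma forward_aux (a : lp (fun _ : ℕ => ℝ) 1) (f : StrongDual ℝ C₀(ℕ, ℝ))
    (hf : ∀ x : C₀(ℕ, ℝ), f x = ∑' n, a n * x n)
    (hsum : Summable fun n => |a n|) (htsum : ∑' n, |a n| = 1)
    (i j : ℕ) (hij : j ≠ i) (hai : a i ≠ 0) (haj : a j ≠ 0) (hji : |a j| ≤ |a i|) :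
    ¬ propHB (LinearMap.ker (f : C₀(ℕ, ℝ) →ₗ[ℝ] ℝ)) := by
  intro hHB
  set Y := LinearMap.ker (f : C₀(ℕ, ℝ) →ₗ[ℝ] ℝ) with hY
  have hajpos : 0 < |a j| := abs_pos.mpr haj
  have haipos : 0 < |a i| := abs_pos.mpr hai
  -- |a j| ≤ 1/2
  have hpair : |a j| + |a i| ≤ 1 := by
    have h1 : ∑ n ∈ ({j, i} : Finset ℕ), |a n| ≤ ∑' n, |a n| :=
      Summable.sum_le_tsum _ (fun n _ => abs_nonneg _) hsum
    rw [Finset.sum_pair hij] at h1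
    linarith [htsum ▸ h1]
  have hj2 : |a j| ≤ 1 / 2 := by linarith
  -- summability of coefficients against x
  have hsumx : ∀ x : C₀(ℕ, ℝ), Summable fun n => a n * x n := by
    intro x
    refine Summable.of_norm_bounded (g := fun n => |a n| * ‖x‖) (hsum.mul_right _) fun n => ?_
    rw [Real.norm_eq_abs, abs_mul]
    exact mul_le_mul_of_nonneg_left (apply_le_norm x n) (abs_nonneg _)
  -- the sign and scale constants
  set s : ℝ := |a j| / a j with hs_def
  have hs_mul : s * a j = |a j| := div_mul_cancel₀ _ haj
  have hs_abs : |s| = 1 := by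
    rw [hs_def, abs_div, abs_abs, div_self (ne_of_gt hajpos)]
  have hss : s * s = 1 := by
    rw [hs_def, div_mul_div_comm, abs_mul_abs_self, div_self (mul_ne_zero haj haj)]
  set c : ℝ := 2 / |a j| with hc_def
  have hc_pos : 0 < c := by positivity
  have hcaj : c * |a j| = 2 := div_mul_cancel₀ _ (ne_of_gt hajpos)
  have hca : c * a j = 2 * s := by
    rw [hc_def, hs_def]; field_simp; ring_nf; rw [sq_abs]
  -- the sharp functional g
  set g : StrongDual ℝ C₀(ℕ, ℝ) := (-s) • evalC0 j with hg_def
  have g_apply : ∀ x : C₀(ℕ, ℝ), g x = -s * x j := by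
    intro x
    rw [hg_def, ContinuousLinearMap.smul_apply, evalC0_apply, smul_eq_mul]
  have hgle : ‖g‖ ≤ 1 := by
    refine ContinuousLinearMap.opNorm_le_bound _ zero_le_one fun x => ?_
    rw [Real.norm_eq_abs, g_apply, abs_mul, abs_neg, hs_abs, one_mul, one_mul]
    exact apply_le_norm x j
  -- the witness y ∈ Y showing that the restriction of g has norm 1
  set v : ℕ → ℝ := fun n => if n = j then -s else if n = i then |a j| / a i else 0 with hv_def
  have hvN : ∀ n, max i j + 1 ≤ n → v n = 0 := by
    intro n hn
    have h1 : n ≠ j := by omega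
    have h2 : n ≠ i := by omega
    simp [hv_def, h1, h2]
  set y : C₀(ℕ, ℝ) := finC0 v (max i j + 1) hvN with hy_def
  have hy_apply : ∀ n, y n = v n := fun n => rfl
  have hyker : y ∈ Y := by
    rw [hY, LinearMap.mem_ker]
    change f y = 0
    rw [hf y]
    have : ∑' n, a n * y n = ∑ n ∈ ({j, i} : Finset ℕ), a n * y n := by
      refine tsum_eq_sum fun b hb => ?_
      simp only [Finset.mem_insert, Finset.mem_singleton, not_or] at hb
      rw [hy_apply]
      simp [hv_def, hb.1, hb.2]
    rw [this, Finset.sum_pair hij, hy_apply, hy_apply]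
    have hvj : v j = -s := by simp [hv_def]
    have hvi : v i = |a j| / a i := by simp [hv_def, hij.symm]
    rw [hvj, hvi]
    field_simp
    linarith [hs_mul]
  have hynorm : ‖y‖ ≤ 1 := by
    refine norm_le_of _ zero_le_one fun n => ?_
    rw [hy_apply]
    rcases eq_or_ne n j with h1 | h1
    · have hvn : v n = -s := by rw [hv_def]; simp [h1]
      rw [hvn, abs_neg, hs_abs]
    · rcases eq_or_ne n i with h2 | h2
      · have hvn : v n = |a j| / a i := by subst h2; rw [hv_def]; simp [hij.symm]
        rw [hvn, abs_div, abs_abs]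
        exact (div_le_one haipos).mpr hji
      · have hvn : v n = 0 := by rw [hv_def]; simp [h1, h2]
        rw [hvn, abs_zero]
        exact zero_le_one
  have hgy : g y = 1 := by
    rw [g_apply, hy_apply]
    have hvj : v j = -s := by simp [hv_def]
    rw [hvj]
    nlinarith [hss]
  have hg_sharp : g ∈ sharp Y := by
    have h1le : 1 ≤ ‖restr Y g‖ := by
      have hnz : ‖(⟨y, hyker⟩ : Y)‖ ≤ 1 := hynorm
      have := (restr Y g).unit_le_opNorm ⟨y, hyker⟩ hnz
      have happ : restr Y g ⟨y, hyker⟩ = g y := rfl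
      rw [happ, hgy, norm_one] at this
      exact this
    have hrle : ‖restr Y g‖ ≤ ‖g‖ := by
      refine ContinuousLinearMap.opNorm_le_bound _ (norm_nonneg g) fun z => ?_
      exact g.le_opNorm (z : C₀(ℕ, ℝ))
    exact le_antisymm (hgle.trans h1le) hrle
  -- the annihilator element h
  set h : StrongDual ℝ C₀(ℕ, ℝ) := c • f with hh_def
  have hann : h ∈ ann Y := by
    intro z hz
    have : f z = 0 := LinearMap.mem_ker.mp hz
    rw [hh_def, ContinuousLinearMap.smul_apply, this, smul_zero]
  have hfdelta : f (delta j) = a j := by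
    rw [hf]
    rw [tsum_eq_single j fun n hn => by rw [delta_apply_ne hn, mul_zero]]
    rw [delta_apply_self, mul_one]
  have hsne : s ≠ 0 := by
    intro h0; rw [h0, abs_zero] at hs_abs; norm_num at hs_abs
  have hne : h ≠ 0 := by
    intro h0
    have h1 : h (delta j) = c * a j := by
      rw [hh_def, ContinuousLinearMap.smul_apply, hfdelta, smul_eq_mul]
    rw [h0, ContinuousLinearMap.zero_apply, hca] at h1
    exact hsne (by linarith)
  -- upper bound on ‖g + h‖
  have hc4 : 4 ≤ c := by
    rw [hc_def, le_div_iff₀ hajpos]; linarith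
  have hgh_le : ‖g + h‖ ≤ c - 1 := by
    refine ContinuousLinearMap.opNorm_le_bound _ (by linarith) fun x => ?_
    have hsplit : ∑' n, a n * x n = a j * x j + ∑' n, ite (n = j) 0 (a n * x n) :=
      Summable.tsum_eq_add_tsum_ite (hsumx x) j
    set T := ∑' n, ite (n = j) 0 (a n * x n) with hT_def
    set w : ℕ → ℝ := fun n => ite (n = j) 0 |a n| with hw_def
    have hw_sum : Summable w := by
      refine Summable.of_norm_bounded (g := fun n => |a n|) hsum fun n => ?_
      rw [hw_def, Real.norm_eq_abs]
      rcases eq_or_ne n j with rfl | h1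
      · simp
      · simp [h1, le_abs_self]
    have hbound : ∀ n, ‖ite (n = j) 0 (a n * x n)‖ ≤ w n * ‖x‖ := by
      intro n
      rw [Real.norm_eq_abs, hw_def]
      rcases eq_or_ne n j with rfl | h1
      · simp
      · simp only [if_neg h1]
        rw [abs_mul]
        exact mul_le_mul_of_nonneg_left (apply_le_norm x n) (abs_nonneg _)
    have hsumIte : Summable fun n => ite (n = j) 0 (a n * x n) :=
      Summable.of_norm_bounded (hw_sum.mul_right _) hbound
    have hw_tsum : ∑' n, w n = 1 - |a j| := by
      have := Summable.tsum_eq_add_tsum_ite hsum j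
      rw [htsum] at this
      rw [hw_def]
      linarith
    have hT : |T| ≤ (1 - |a j|) * ‖x‖ := by
      calc |T| ≤ ∑' n, ‖ite (n = j) 0 (a n * x n)‖ := by
            rw [← Real.norm_eq_abs]
            exact norm_tsum_le_tsum_norm (by simpa using hsumIte.abs)
        _ ≤ ∑' n, w n * ‖x‖ := by
            refine Summable.tsum_le_tsum hbound (by simpa using hsumIte.abs) (hw_sum.mul_right _)
        _ = (1 - |a j|) * ‖x‖ := by rw [tsum_mul_right, hw_tsum]
    have happ : (g + h) x = (c * a j - s) * x j + c * T := by
      rw [ContinuousLinearMap.add_apply, g_apply, hh_def, ContinuousLinearMap.smul_apply,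
        hf x, smul_eq_mul, hsplit]
      ring
    rw [Real.norm_eq_abs, happ]
    have h1 : |c * a j - s| = 1 := by
      rw [hca]
      have : 2 * s - s = s := by ring
      rw [this, hs_abs]
    calc |(c * a j - s) * x j + c * T| ≤ |c * a j - s| * |x j| + c * |T| := by
          refine (abs_add_le _ _).trans ?_
          rw [abs_mul, abs_mul, abs_of_pos hc_pos]
      _ ≤ 1 * ‖x‖ + c * ((1 - |a j|) * ‖x‖) := by
          refine add_le_add ?_ ?_
          · rw [h1]; exact mul_le_mul_of_nonneg_left (apply_le_norm x j) zero_le_one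
          · exact mul_le_mul_of_nonneg_left hT (le_of_lt hc_pos)
      _ = (c - 1) * ‖x‖ := by nlinarith [hcaj, norm_nonneg x]
  -- lower bound on ‖h‖
  obtain ⟨N, hN⟩ := ((hsum.hasSum.tendsto_sum_nat).eventually
    (eventually_gt_nhds (show 1 - |a j| / 2 < ∑' n, |a n| by rw [htsum]; linarith))).exists
  have hf_lb : 1 - |a j| / 2 < ‖f‖ := lt_of_lt_of_le hN (f_norm_ge a f hf hsumx N)
  have hh_norm : c - 1 < ‖h‖ := by
    have hfe : f = c⁻¹ • h := by
      rw [hh_def, smul_smul, inv_mul_cancel₀ (ne_of_gt hc_pos), one_smul]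
    have h2 := ContinuousLinearMap.opNorm_smul_le c⁻¹ h
    rw [← hfe, Real.norm_eq_abs, abs_of_pos (inv_pos.mpr hc_pos)] at h2
    have h3 : c * ‖f‖ ≤ ‖h‖ := by
      have := mul_le_mul_of_nonneg_left h2 (le_of_lt hc_pos)
      rwa [← mul_assoc, mul_inv_cancel₀ (ne_of_gt hc_pos), one_mul] at this
    nlinarith [hcaj, h3]
  obtain ⟨hlt, hle⟩ := hHB.2.2.2 g hg_sharp h hann hne
  linarith [hle.trans hgh_le]

section Backward

variable (f : StrongDual ℝ C₀(ℕ, ℝ)) (m : ℕ) (ε : ℝ)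

set_option maxHeartbeats 2000000 in
lemma backward_aux (hε : ε = 1 ∨ ε = -1)
    (hfx : ∀ x : C₀(ℕ, ℝ), f x = ε * x m) : propHB (LinearMap.ker (f : C₀(ℕ, ℝ) →ₗ[ℝ] ℝ)) := by
  have hεne : ε ≠ 0 := by rcases hε with h | h <;> rw [h] <;> norm_num
  set Y := LinearMap.ker (f : C₀(ℕ, ℝ) →ₗ[ℝ] ℝ) with hY
  have hker : ∀ x : C₀(ℕ, ℝ), x ∈ Y ↔ x m = 0 := by
    intro x
    rw [hY, LinearMap.mem_ker]
    change f x = 0 ↔ _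
    rw [hfx x, mul_eq_zero]
    simp [hεne]
  -- the decomposition x = (x - x m • δ) + x m • δ
  have hmem : ∀ x : C₀(ℕ, ℝ), x - x m • delta m ∈ Y := by
    intro x
    rw [hker]
    simp
  have hsub_apply : ∀ (x : C₀(ℕ, ℝ)) (n : ℕ), (x - x m • delta m) n = x n - x m * delta m n :=
    fun x n => rfl
  have hnorm_sub : ∀ x : C₀(ℕ, ℝ), ‖x - x m • delta m‖ ≤ ‖x‖ := by
    intro x
    refine norm_le_of _ (norm_nonneg x) fun n => ?_
    rw [hsub_apply]
    by_cases h : n = m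
    · subst h; simp [norm_nonneg]
    · rw [delta_apply_ne h]
      simpa using apply_le_norm x n
  have hcoe : ∀ z : Y, ‖(z : C₀(ℕ, ℝ))‖ = ‖z‖ := fun z => rfl
  have hrestr_apply : ∀ (G : StrongDual ℝ C₀(ℕ, ℝ)) (z : Y), restr Y G z = G (z : C₀(ℕ, ℝ)) :=
    fun G z => rfl
  -- key lemma
  have keyL : ∀ G : StrongDual ℝ C₀(ℕ, ℝ), ‖G‖ = ‖restr Y G‖ + |G (delta m)| := by
    intro G
    have hGd : |G (delta m)| ≤ ‖G‖ := by
      calc |G (delta m)| ≤ ‖G‖ * ‖delta m‖ := G.le_opNorm _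
        _ ≤ ‖G‖ * 1 := by
            exact mul_le_mul_of_nonneg_left (norm_delta_le m) (norm_nonneg G)
        _ = ‖G‖ := mul_one _
    refine le_antisymm ?_ ?_
    · refine ContinuousLinearMap.opNorm_le_bound _
        (add_nonneg (ContinuousLinearMap.opNorm_nonneg _) (abs_nonneg _)) fun x => ?_
      set y := x - x m • delta m with hy
      have hGx : G x = G y + x m * G (delta m) := by
        have : x = y + x m • delta m := by rw [hy]; abel
        conv_lhs => rw [this]
        rw [map_add, map_smul]
        simp
      have h1 : |G y| ≤ ‖restr Y G‖ * ‖x‖ := by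
        have := (restr Y G).le_opNorm ⟨y, hmem x⟩
        rw [hrestr_apply] at this
        calc |G y| ≤ ‖restr Y G‖ * ‖(⟨y, hmem x⟩ : Y)‖ := this
          _ ≤ ‖restr Y G‖ * ‖x‖ := by
              refine mul_le_mul_of_nonneg_left ?_ (ContinuousLinearMap.opNorm_nonneg _)
              rw [← hcoe]; exact hnorm_sub x
      have h2 : |x m| ≤ ‖x‖ := apply_le_norm x m
      rw [Real.norm_eq_abs, hGx]
      calc |G y + x m * G (delta m)| ≤ |G y| + |x m| * |G (delta m)| := by
            refine (abs_add_le _ _).trans ?_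
            rw [abs_mul]
        _ ≤ ‖restr Y G‖ * ‖x‖ + ‖x‖ * |G (delta m)| := by
            refine add_le_add h1 ?_
            exact mul_le_mul_of_nonneg_right h2 (abs_nonneg _)
        _ = (‖restr Y G‖ + |G (delta m)|) * ‖x‖ := by ring
    · have hr : ‖restr Y G‖ ≤ ‖G‖ - |G (delta m)| := by
        refine ContinuousLinearMap.opNorm_le_bound _ (by linarith) fun z => ?_
        have hz : (z : C₀(ℕ, ℝ)) m = 0 := (hker _).mp z.2
        have hxpm : ∀ σ : ℝ, |σ| = 1 →
            ‖(z : C₀(ℕ, ℝ)) + (σ * ‖z‖) • delta m‖ ≤ ‖z‖ := by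
          intro σ hσ
          refine norm_le_of _ (norm_nonneg z) fun n => ?_
          show |(z : C₀(ℕ, ℝ)) n + (σ * ‖z‖) * delta m n| ≤ ‖z‖
          by_cases h : n = m
          · subst h
            rw [hz, delta_apply_self, zero_add, mul_one, abs_mul, hσ, one_mul,
              abs_norm]
          · rw [delta_apply_ne h, mul_zero, add_zero]
            rw [← hcoe]
            exact apply_le_norm _ n
        have hplus : |G z + ‖z‖ * G (delta m)| ≤ ‖G‖ * ‖z‖ := by
          have := G.le_opNorm ((z : C₀(ℕ, ℝ)) + ((1 : ℝ) * ‖z‖) • delta m)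
          rw [map_add, map_smul] at this
          calc |G z + ‖z‖ * G (delta m)|
              = ‖G ((z : C₀(ℕ, ℝ))) + ((1:ℝ) * ‖z‖) * G (delta m)‖ := by
                rw [Real.norm_eq_abs, one_mul]
            _ ≤ ‖G‖ * ‖(z : C₀(ℕ, ℝ)) + ((1:ℝ) * ‖z‖) • delta m‖ := by
                simpa using this
            _ ≤ ‖G‖ * ‖z‖ :=
                mul_le_mul_of_nonneg_left (hxpm 1 (by norm_num)) (norm_nonneg G)
        have hminus : |G z - ‖z‖ * G (delta m)| ≤ ‖G‖ * ‖z‖ := by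
          have := G.le_opNorm ((z : C₀(ℕ, ℝ)) + ((-1 : ℝ) * ‖z‖) • delta m)
          rw [map_add, map_smul] at this
          calc |G z - ‖z‖ * G (delta m)|
              = ‖G ((z : C₀(ℕ, ℝ))) + ((-1:ℝ) * ‖z‖) * G (delta m)‖ := by
                rw [Real.norm_eq_abs]; ring_nf
            _ ≤ ‖G‖ * ‖(z : C₀(ℕ, ℝ)) + ((-1:ℝ) * ‖z‖) • delta m‖ := by
                simpa using this
            _ ≤ ‖G‖ * ‖z‖ :=
                mul_le_mul_of_nonneg_left (hxpm (-1) (by norm_num)) (norm_nonneg G)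
        have habs := abs_add_abs_le_max (G z) (‖z‖ * G (delta m))
        have hmax : max (|G z + ‖z‖ * G (delta m)|) (|G z - ‖z‖ * G (delta m)|)
            ≤ ‖G‖ * ‖z‖ := max_le hplus hminus
        have : |G z| + ‖z‖ * |G (delta m)| ≤ ‖G‖ * ‖z‖ := by
          have h' : |‖z‖ * G (delta m)| = ‖z‖ * |G (delta m)| := by
            rw [abs_mul, abs_norm]
          linarith [habs.trans hmax, h'.symm.le]
        rw [Real.norm_eq_abs, hrestr_apply]
        nlinarith [norm_nonneg z, abs_nonneg (G (delta m))]
      linarith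
  have hsharp_iff : ∀ G : StrongDual ℝ C₀(ℕ, ℝ), G ∈ sharp Y ↔ G (delta m) = 0 := by
    intro G
    rw [sharp, mem_setOf_eq, keyL G]
    constructor
    · intro h
      have : |G (delta m)| = 0 := by linarith
      exact abs_eq_zero.mp this
    · intro h; rw [h]; simp
  have hann_rep : ∀ H ∈ ann Y, ∀ x : C₀(ℕ, ℝ), H x = x m * H (delta m) := by
    intro H hH x
    have h0 : H (x - x m • delta m) = 0 := hH _ (hmem x)
    rw [map_sub, map_smul] at h0
    have : H x - x m * H (delta m) = 0 := by simpa using h0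
    linarith
  refine ⟨?_, ?_, ?_, ?_⟩
  · intro F hF G hG
    rw [hsharp_iff] at *
    rw [ContinuousLinearMap.add_apply, hF, hG, add_zero]
  · intro c F hF
    rw [hsharp_iff] at *
    rw [ContinuousLinearMap.smul_apply, hF, smul_zero]
  · intro G
    refine ⟨G - G (delta m) • evalC0 m, ?_, G (delta m) • evalC0 m, ?_,
      (sub_add_cancel G _).symm⟩
    · rw [hsharp_iff, ContinuousLinearMap.sub_apply, ContinuousLinearMap.smul_apply,
        evalC0_apply, delta_apply_self, smul_eq_mul, mul_one, sub_self]
    · intro y hy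
      have h0 : (y : C₀(ℕ, ℝ)) m = 0 := (hker _).mp hy
      rw [ContinuousLinearMap.smul_apply, evalC0_apply, h0, smul_zero]
  · intro g hg h hh hne
    have hhd : h (delta m) ≠ 0 := by
      intro h0
      refine hne (ContinuousLinearMap.ext fun x => ?_)
      rw [hann_rep h hh x, h0, mul_zero, ContinuousLinearMap.zero_apply]
    have hgd : g (delta m) = 0 := (hsharp_iff g).mp hg
    have hghd : (g + h) (delta m) = h (delta m) := by
      rw [ContinuousLinearMap.add_apply, hgd, zero_add]
    have hrestr_eq : restr Y (g + h) = restr Y g := by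
      ext z
      rw [hrestr_apply, hrestr_apply, ContinuousLinearMap.add_apply, hh _ z.2, add_zero]
    have hnorm_gh : ‖g + h‖ = ‖g‖ + |h (delta m)| := by
      rw [keyL (g + h), hrestr_eq, hghd, hg]
    constructor
    · rw [hnorm_gh]
      have : 0 < |h (delta m)| := abs_pos.mpr hhd
      linarith
    · have hh_le : ‖h‖ ≤ |h (delta m)| := by
        refine ContinuousLinearMap.opNorm_le_bound _ (abs_nonneg _) fun x => ?_
        rw [Real.norm_eq_abs, hann_rep h hh x, abs_mul, mul_comm]
        exact mul_le_mul_of_nonneg_left (apply_le_norm x m) (abs_nonneg _)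
      rw [hnorm_gh]
      have : 0 ≤ ‖g‖ := norm_nonneg g
      linarith
end Backward

end Stmt13Aux

/-- a hyperplane `Y = ker f` of `c₀`, where `f` is induced by `(aₙ) ∈ ℓ¹` with
`‖(aₙ)‖₁ = 1`, has property-(HB) in `c₀` if and only if `(aₙ) = ± e_m` for some `m`
(i.e. `Y` is an `M`-summand in `c₀`). -/
theorem stmt13 (a : lp (fun _ : ℕ => ℝ) 1) (ha1 : ‖a‖ = 1)
    (f : StrongDual ℝ C₀(ℕ, ℝ)) (hf : ∀ x : C₀(ℕ, ℝ), f x = ∑' n, a n * x n) :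
    propHB (LinearMap.ker (f : C₀(ℕ, ℝ) →ₗ[ℝ] ℝ)) ↔
      ∃ m : ℕ, (∀ n : ℕ, n ≠ m → a n = 0) ∧ (a m = 1 ∨ a m = -1) := by
  constructor
  · intro hHB
    by_contra hno
    push_neg at hno
    have hsum : Summable (fun n => |a n|) := by
      have := (lp.memℓp a).summable (p := 1) (by norm_num)
      simpa using this
    have htsum : ∑' n, |a n| = 1 := by
      have h0 := lp.norm_eq_tsum_rpow (p := 1) (by norm_num) a
      rw [ha1] at h0
      have h2 : (1 : ℝ) = ∑' n, |a n| := by simpa using h0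
      exact h2.symm
    obtain ⟨i, hi⟩ : ∃ i, a i ≠ 0 := by
      by_contra hz
      push_neg at hz
      have h1 : ∑' n, |a n| = 0 := by simp [hz]
      rw [htsum] at h1; norm_num at h1
    obtain ⟨j, hji, hj⟩ : ∃ j, j ≠ i ∧ a j ≠ 0 := by
      by_contra hz
      push_neg at hz
      have hzz : ∀ n, n ≠ i → a n = 0 := fun n hn => hz n hn
      have h1 : ∑' n, |a n| = |a i| :=
        tsum_eq_single i fun n hn => by rw [hzz n hn, abs_zero]
      rw [htsum] at h1
      rcases (abs_eq (by norm_num : (0:ℝ) ≤ 1)).mp h1.symm with h | h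
      · exact (hno i hzz).1 h
      · exact (hno i hzz).2 h
    rcases le_total (|a j|) (|a i|) with hle | hle
    · exact Stmt13Aux.forward_aux a f hf hsum htsum i j hji hi hj hle hHB
    · exact Stmt13Aux.forward_aux a f hf hsum htsum j i (Ne.symm hji) hj hi hle hHB
  · rintro ⟨m, hm, hpm⟩
    have hfx : ∀ x : C₀(ℕ, ℝ), f x = a m * x m := by
      intro x
      rw [hf x, tsum_eq_single m fun n hn => by rw [hm n hn, zero_mul]]
    exact Stmt13Aux.backward_aux f m (a m) hpm hfx
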